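/- Let A : [T₁,T₂] → ℝ be a lower semi-continuous function with A(t) > 0 for all t, satisfying in the barrier sense the differential inequality d/dt⁺ A(t) ≤ (3/(4t)) A(t) − 4π for all t ∈ [T₁,T₂], where 0 < T₁ < T₂. Then the quantity t^{1/4}(t⁻¹ A(t) + 16π) is monotonically non-increasing on [T₁,T₂], and consequently T₂ < (1 + A(T₁)/(16π T₁))⁴ · T₁. -/

import Mathlib

open Set Filter Topology

/-- A positive lsc function times a positive continuous coefficient, plus a continuous
function, is lsc. -/
lemma lsc_aux {s : Set ℝ} {A c₁ c₂ : ℝ → ℝ} (hA : LowerSemicontinuousOn A s)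
    (hApos : ∀ x ∈ s, 0 < A x) (h₁ : ContinuousOn c₁ s) (h₁pos : ∀ x ∈ s, 0 < c₁ x)
    (h₂ : ContinuousOn c₂ s) :
    LowerSemicontinuousOn (fun u => c₁ u * A u + c₂ u) s := by
  intro x hx y hy
  simp only at hy
  have hAx := hApos x hx
  have hc1 := h₁pos x hx
  set d : ℝ := c₁ x * A x + c₂ x - y with hd
  have hdpos : 0 < d := by simp only [hd]; linarith
  set η : ℝ := min (A x / 2) (d / (2 * c₁ x)) with hη
  have hηpos : 0 < η := lt_min (by linarith) (by positivity)
  have hηA : η ≤ A x / 2 := min_le_left _ _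
  have hηd : c₁ x * η ≤ d / 2 := by
    have h := min_le_right (A x / 2) (d / (2 * c₁ x))
    calc c₁ x * η ≤ c₁ x * (d / (2 * c₁ x)) := by
          exact mul_le_mul_of_nonneg_left h hc1.le
      _ = d / 2 := by field_simp
  have hlt : y < c₁ x * (A x - η) + c₂ x := by
    have : c₁ x * (A x - η) + c₂ x = (c₁ x * A x + c₂ x) - c₁ x * η := by ring
    rw [this]; simp only [hd] at hdpos hηd ⊢; linarith
  have hev1 : ∀ᶠ u in 𝓝[s] x, A x - η < A u := hA x hx _ (by linarith)
  have hcont : ContinuousWithinAt (fun u => c₁ u * (A x - η) + c₂ u) s x :=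
    ((h₁ x hx).mul continuousWithinAt_const).add (h₂ x hx)
  have hev2 : ∀ᶠ u in 𝓝[s] x, y < c₁ u * (A x - η) + c₂ u :=
    hcont.eventually (eventually_gt_nhds hlt)
  have hev3 : ∀ᶠ u in 𝓝[s] x, 0 < c₁ u := (h₁ x hx).eventually (eventually_gt_nhds hc1)
  filter_upwards [hev1, hev2, hev3] with u h1 h2 h3
  have : c₁ u * (A x - η) ≤ c₁ u * A u := mul_le_mul_of_nonneg_left h1.le h3.le
  linarith

/-- A lower semicontinuous function whose upper right Dini derivative is ≤ 0 (in ε-δ form)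
is nonincreasing. -/
lemma mono_of_dini {a b : ℝ} (f : ℝ → ℝ)
    (hf : LowerSemicontinuousOn f (Set.Icc a b))
    (hd : ∀ t ∈ Set.Ico a b, ∀ ε > 0, ∃ δ > 0, ∀ h : ℝ, 0 < h → h < δ → t + h ≤ b →
        f (t + h) - f t ≤ ε * h) :
    ∀ s ∈ Set.Icc a b, ∀ t ∈ Set.Icc a b, s ≤ t → f t ≤ f s := by
  intro s hs t ht hst
  have key : ∀ ε > 0, f t ≤ f s + ε * (t - s) := by
    intro ε hε
    set S := {u : ℝ | u ∈ Set.Icc s t ∧ f u ≤ f s + ε * (u - s)} with hS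
    have hsS : s ∈ S := ⟨⟨le_rfl, hst⟩, by simp⟩
    have hne : S.Nonempty := ⟨s, hsS⟩
    have hbdd : BddAbove S := ⟨t, fun u hu => hu.1.2⟩
    set c := sSup S with hc
    have hcs : s ≤ c := le_csSup hbdd hsS
    have hct : c ≤ t := csSup_le hne fun u hu => hu.1.2
    have hcab : c ∈ Set.Icc a b := ⟨hs.1.trans hcs, hct.trans ht.2⟩
    have hfc : f c ≤ f s + ε * (c - s) := by
      by_contra hcon
      push_neg at hcon
      have hev := hf c hcab _ hcon
      obtain ⟨δ, hδ, hball⟩ := Metric.mem_nhdsWithin_iff.mp hev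
      obtain ⟨u, huS, hu⟩ := exists_lt_of_lt_csSup hne (show c - δ < c by linarith)
      have huc : u ≤ c := le_csSup hbdd huS
      have huab : u ∈ Set.Icc a b := ⟨hs.1.trans huS.1.1, huS.1.2.trans ht.2⟩
      have hdist : u ∈ Metric.ball c δ := by
        rw [Metric.mem_ball, Real.dist_eq, abs_lt]; constructor <;> linarith
      have h1 : f s + ε * (c - s) < f u := hball ⟨hdist, huab⟩
      have h2 : f u ≤ f s + ε * (u - s) := huS.2
      nlinarith
    rcases eq_or_lt_of_le hct with hEq | hlt
    · rw [← hEq]; exact hfc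
    · exfalso
      have hcIco : c ∈ Set.Ico a b := ⟨hcab.1, lt_of_lt_of_le hlt ht.2⟩
      obtain ⟨δ, hδ, hδbound⟩ := hd c hcIco ε hε
      set h := min (δ / 2) (t - c) with hh'
      have hhr : h ≤ t - c := min_le_right _ _
      have hh : 0 < h := lt_min (by linarith) (by linarith)
      have hhδ : h < δ := lt_of_le_of_lt (min_le_left _ _) (by linarith)
      have hcb : c + h ≤ b := by
        have : c + h ≤ t := by linarith
        linarith [ht.2]
      have hstep := hδbound h hh hhδ hcb
      have hmem : c + h ∈ S := ⟨⟨by linarith, by linarith⟩, by nlinarith⟩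
      have := le_csSup hbdd hmem
      linarith
  by_contra hcon
  push_neg at hcon
  have hts : 0 ≤ t - s := by linarith
  have h1 : (0:ℝ) < t - s + 1 := by linarith
  have hε' : 0 < (f t - f s) / (2 * (t - s + 1)) := div_pos (by linarith) (by linarith)
  have hk := key _ hε'
  have h2 : (f t - f s) / (2 * (t - s + 1)) * (t - s) ≤ (f t - f s) / 2 := by
    rw [div_mul_eq_mul_div, div_le_div_iff₀ (by positivity) (by norm_num)]
    nlinarith
  linarith

lemma dini_phi (T₁ T₂ : ℝ) (hT₁ : 0 < T₁) (A : ℝ → ℝ)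
    (hdini : ∀ t ∈ Set.Ico T₁ T₂, ∀ ε > 0, ∃ δ > 0, ∀ h : ℝ, 0 < h → h < δ → t + h ≤ T₂ →
      A (t + h) - A t ≤ (3 / (4 * t) * A t - 4 * Real.pi + ε) * h) :
    ∀ t ∈ Set.Ico T₁ T₂, ∀ ε > 0, ∃ δ > 0, ∀ h : ℝ, 0 < h → h < δ → t + h ≤ T₂ →
      (fun u => u ^ (-(3:ℝ)/4) * A u + 16 * Real.pi * u ^ ((1:ℝ)/4)) (t + h)
        - (fun u => u ^ (-(3:ℝ)/4) * A u + 16 * Real.pi * u ^ ((1:ℝ)/4)) t ≤ ε * h := by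
  intro t ht ε hε
  have ht0 : 0 < t := lt_of_lt_of_le hT₁ ht.1
  set ε' : ℝ := ε * t ^ ((3:ℝ)/4) / 2 with hε'def
  have hε'pos : 0 < ε' := by
    have := Real.rpow_pos_of_pos ht0 ((3:ℝ)/4); positivity
  obtain ⟨δ₀, hδ₀, hbound⟩ := hdini t ht ε' hε'pos
  set k : ℝ := 3 / (4 * t) * A t - 4 * Real.pi + ε' with hk
  set G : ℝ → ℝ := fun h => (t + h) ^ (-(3:ℝ)/4) * (A t + k * h)
      + 16 * Real.pi * (t + h) ^ ((1:ℝ)/4) with hG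
  -- derivative of G at 0 is ε/2
  have hadd : HasDerivAt (fun h : ℝ => t + h) 1 0 := by
    simpa using (hasDerivAt_id (0:ℝ)).const_add t
  have hne : (fun h : ℝ => t + h) 0 ≠ 0 := by simpa using ht0.ne'
  have h1 : HasDerivAt (fun h : ℝ => (t + h) ^ (-(3:ℝ)/4))
      (1 * (-(3:ℝ)/4) * (t + 0) ^ (-(3:ℝ)/4 - 1)) 0 := hadd.rpow_const (Or.inl hne)
  have h2 : HasDerivAt (fun h : ℝ => A t + k * h) k 0 := by
    simpa using ((hasDerivAt_id (0:ℝ)).const_mul k).const_add (A t)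
  have h3 := h1.mul h2
  have h4 : HasDerivAt (fun h : ℝ => (t + h) ^ ((1:ℝ)/4))
      (1 * ((1:ℝ)/4) * (t + 0) ^ ((1:ℝ)/4 - 1)) 0 := hadd.rpow_const (Or.inl hne)
  have h5 := h4.const_mul (16 * Real.pi)
  have hGd : HasDerivAt G (ε / 2) 0 := by
    refine (h3.add h5).congr_deriv ?_
    symm
    have e1 : t ^ (-(3:ℝ)/4 - 1) = t ^ (-(3:ℝ)/4) / t := by
      rw [Real.rpow_sub ht0, Real.rpow_one]
    have e2 : t ^ ((1:ℝ)/4 - 1) = t ^ (-(3:ℝ)/4) := by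
      rw [show ((1:ℝ)/4 - 1) = -(3:ℝ)/4 by norm_num]
    have e3 : t ^ (-(3:ℝ)/4) * t ^ ((3:ℝ)/4) = 1 := by
      rw [← Real.rpow_add ht0]; norm_num
    simp only [add_zero, mul_zero]
    rw [e1, e2]
    simp only [hk, hε'def]
    have htne : t ≠ 0 := ht0.ne'
    field_simp
    have e3' : t ^ (-((3:ℝ)/4)) * t ^ ((3:ℝ)/4) = 1 := by rw [← Real.rpow_add ht0]; norm_num
    linear_combination (-4 * ε * t) * e3'
  have hG0 : G 0 = t ^ (-(3:ℝ)/4) * A t + 16 * Real.pi * t ^ ((1:ℝ)/4) := by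
    simp [hG]
  clear_value ε' k G
  -- slope bound
  have hslope : Tendsto (slope G 0) (𝓝[≠] (0:ℝ)) (𝓝 (ε / 2)) :=
    hasDerivAt_iff_tendsto_slope.mp hGd
  have hmonoF : 𝓝[>] (0:ℝ) ≤ 𝓝[≠] (0:ℝ) :=
    nhdsWithin_mono _ (fun x hx => ne_of_gt hx)
  have hev1 : ∀ᶠ h in 𝓝[>] (0:ℝ), slope G 0 h < ε :=
    (hslope.mono_left hmonoF).eventually_lt_const (by linarith)
  have hev2 : ∀ᶠ h in 𝓝[>] (0:ℝ), h < δ₀ :=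
    eventually_of_mem (Ioo_mem_nhdsGT_of_mem ⟨le_refl (0:ℝ), hδ₀⟩) (fun x hx => hx.2)
  have hev3 : ∀ᶠ h in 𝓝[>] (0:ℝ), (0:ℝ) < h :=
    eventually_of_mem self_mem_nhdsWithin (fun x hx => hx)
  obtain ⟨δ, hδIoi, hsub⟩ :=
    mem_nhdsGT_iff_exists_Ioo_subset.mp ((hev1.and hev2).and hev3)
  refine ⟨δ, hδIoi, ?_⟩
  intro h hh hhδ hhb
  obtain ⟨⟨hsl, hδ₀'⟩, hpos'⟩ := hsub ⟨hh, hhδ⟩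
  have hA : A (t + h) - A t ≤ k * h := hbound h hh hδ₀' hhb
  have hth : 0 < (t + h) ^ (-(3:ℝ)/4) := Real.rpow_pos_of_pos (by linarith) _
  have hφG : (t + h) ^ (-(3:ℝ)/4) * A (t + h) + 16 * Real.pi * (t + h) ^ ((1:ℝ)/4) ≤ G h := by
    simp only [hG]
    have : (t + h) ^ (-(3:ℝ)/4) * A (t + h) ≤ (t + h) ^ (-(3:ℝ)/4) * (A t + k * h) :=
      mul_le_mul_of_nonneg_left (by linarith) hth.le
    linarith
  have hGslope : G h - G 0 < ε * h := by
    have := hsl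
    rw [slope_def_field] at this
    rw [div_lt_iff₀ (by linarith : (0:ℝ) < h - 0)] at this
    linarith
  have hfin : (t + h) ^ (-(3:ℝ)/4) * A (t + h) + 16 * Real.pi * (t + h) ^ ((1:ℝ)/4)
      ≤ G 0 + ε * h := by linarith
  rw [hG0] at hfin
  simp only
  linarith


/- STATEMENT 2: Let A : [T₁,T₂] → ℝ be a lower semi-continuous positive function satisfying, in
the barrier sense (equivalently via the upper right Dini derivative, expressed below in ε-δ
form), d/dt⁺ A(t) ≤ (3/(4t)) A(t) − 4π on [T₁,T₂], where 0 < T₁ < T₂.  Then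
t^{1/4}(t⁻¹A(t) + 16π) is monotonically non-increasing on [T₁,T₂], and consequently
T₂ < (1 + A(T₁)/(16π T₁))⁴ · T₁. -/
theorem stmt_2 (T₁ T₂ : ℝ) (hT₁ : 0 < T₁) (hT₁₂ : T₁ < T₂)
    (A : ℝ → ℝ)
    (hpos : ∀ t ∈ Set.Icc T₁ T₂, 0 < A t)
    (hlsc : LowerSemicontinuousOn A (Set.Icc T₁ T₂))
    -- upper right Dini derivative bound: d/dt⁺ A(t) ≤ (3/(4t)) A(t) − 4π
    (hdini : ∀ t ∈ Set.Ico T₁ T₂, ∀ ε > 0, ∃ δ > 0, ∀ h : ℝ, 0 < h → h < δ → t + h ≤ T₂ →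
      A (t + h) - A t ≤ (3 / (4 * t) * A t - 4 * Real.pi + ε) * h) :
    (∀ s ∈ Set.Icc T₁ T₂, ∀ t ∈ Set.Icc T₁ T₂, s ≤ t →
      t ^ ((1:ℝ)/4) * (A t / t + 16 * Real.pi) ≤ s ^ ((1:ℝ)/4) * (A s / s + 16 * Real.pi)) ∧
    T₂ < (1 + A T₁ / (16 * Real.pi * T₁)) ^ 4 * T₁ := by
  have hπ : (0:ℝ) < Real.pi := Real.pi_pos
  set φ : ℝ → ℝ := fun u => u ^ (-(3:ℝ)/4) * A u + 16 * Real.pi * u ^ ((1:ℝ)/4) with hφ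
  have hposIcc : ∀ u ∈ Set.Icc T₁ T₂, (0:ℝ) < u := fun u hu => lt_of_lt_of_le hT₁ hu.1
  -- φ is lower semicontinuous on the interval
  have hφlsc : LowerSemicontinuousOn φ (Set.Icc T₁ T₂) := by
    apply lsc_aux hlsc hpos
    · exact ContinuousOn.rpow_const continuousOn_id
        (fun x hx => Or.inl (ne_of_gt (hposIcc x hx)))
    · exact fun x hx => Real.rpow_pos_of_pos (hposIcc x hx) _
    · exact ContinuousOn.const_smul (ContinuousOn.rpow_const continuousOn_id
        (fun x hx => Or.inl (ne_of_gt (hposIcc x hx)))) (16 * Real.pi)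
  -- φ is nonincreasing
  have hmono : ∀ s ∈ Set.Icc T₁ T₂, ∀ t ∈ Set.Icc T₁ T₂, s ≤ t → φ t ≤ φ s :=
    mono_of_dini φ hφlsc (dini_phi T₁ T₂ hT₁ A hdini)
  -- rewriting lemma
  have hrw : ∀ u : ℝ, 0 < u → u ^ ((1:ℝ)/4) * (A u / u + 16 * Real.pi) = φ u := by
    intro u hu
    have e2 : u ^ (-(3:ℝ)/4) = u ^ ((1:ℝ)/4) / u := by
      rw [show (-(3:ℝ)/4) = (1:ℝ)/4 - 1 by norm_num, Real.rpow_sub hu, Real.rpow_one]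
    simp only [hφ, e2]
    field_simp
  have hmain : ∀ s ∈ Set.Icc T₁ T₂, ∀ t ∈ Set.Icc T₁ T₂, s ≤ t →
      t ^ ((1:ℝ)/4) * (A t / t + 16 * Real.pi) ≤ s ^ ((1:ℝ)/4) * (A s / s + 16 * Real.pi) := by
    intro s hs t ht hst
    rw [hrw s (hposIcc s hs), hrw t (hposIcc t ht)]
    exact hmono s hs t ht hst
  refine ⟨hmain, ?_⟩
  have hT₂ : (0:ℝ) < T₂ := hT₁.trans hT₁₂
  have hmem₁ : T₁ ∈ Set.Icc T₁ T₂ := ⟨le_rfl, hT₁₂.le⟩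
  have hmem₂ : T₂ ∈ Set.Icc T₁ T₂ := ⟨hT₁₂.le, le_rfl⟩
  have h1 := hmain T₁ hmem₁ T₂ hmem₂ hT₁₂.le
  have hr2 : (0:ℝ) < T₂ ^ ((1:ℝ)/4) := Real.rpow_pos_of_pos hT₂ _
  have hAT₂ : 0 < A T₂ / T₂ := div_pos (hpos T₂ hmem₂) hT₂
  have h2 : T₂ ^ ((1:ℝ)/4) * (16 * Real.pi) < T₁ ^ ((1:ℝ)/4) * (A T₁ / T₁ + 16 * Real.pi) := by
    nlinarith
  have h3 : T₂ ^ ((1:ℝ)/4) < T₁ ^ ((1:ℝ)/4) * (1 + A T₁ / (16 * Real.pi * T₁)) := by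
    rw [← mul_lt_mul_iff_of_pos_right (show (0:ℝ) < 16 * Real.pi by positivity)]
    have e : T₁ ^ ((1:ℝ)/4) * (1 + A T₁ / (16 * Real.pi * T₁)) * (16 * Real.pi)
        = T₁ ^ ((1:ℝ)/4) * (A T₁ / T₁ + 16 * Real.pi) := by
      field_simp
      ring
    rw [e]
    exact h2
  have h4 : (T₂ ^ ((1:ℝ)/4)) ^ (4:ℕ)
      < (T₁ ^ ((1:ℝ)/4) * (1 + A T₁ / (16 * Real.pi * T₁))) ^ (4:ℕ) :=
    pow_lt_pow_left₀ h3 (Real.rpow_nonneg hT₂.le _) (by norm_num)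
  have e4 : ∀ x : ℝ, 0 < x → (x ^ ((1:ℝ)/4)) ^ (4:ℕ) = x := by
    intro x hx
    rw [← Real.rpow_natCast (x ^ ((1:ℝ)/4)) 4, ← Real.rpow_mul hx.le]
    norm_num
  rw [mul_pow, e4 T₂ hT₂, e4 T₁ hT₁] at h4
  calc T₂ < T₁ * (1 + A T₁ / (16 * Real.pi * T₁)) ^ 4 := h4
    _ = (1 + A T₁ / (16 * Real.pi * T₁)) ^ 4 * T₁ := by ring
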